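/- Let S be a schedule of an acyclic graph G with node costs, and let H be a hump of G with useful peak v. Let T be obtained from S by moving all nodes of H so that they are consecutive around v, preserving their relative order (the nodes of H before v are moved right to be adjacent to v; the nodes after v are moved left). Then T is still a schedule of G and height(T) ≤ height(S). -/

import Mathlib

def cost (L : List ℤ) : ℤ := L.sum

def height (L : List ℤ) : ℤ :=
  ((List.range (L.length + 1)).map fun k => (L.take k).sum).foldr max 0

variable {V : Type*} [DecidableEq V]

/-- `S` is a schedule (topological ordering) of the directed graph `r`. -/
def IsTopo (r : V → V → Prop) (S : List V) : Prop :=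
  S.Nodup ∧ (∀ v : V, v ∈ S) ∧
    ∀ x y, r x y → ∀ ix iy : ℕ, S[ix]? = some x → S[iy]? = some y → ix < iy

/-- `H` is a chain of `r`: its nodes are consecutive along `H`, and the only
edges of `r` incident on its nodes are the chain edges together with one from
a predecessor into `H.head` and one from `H.getLast` to a successor. -/
def IsChainOf (r : V → V → Prop) (H : List V) : Prop :=
  H ≠ [] ∧ H.Nodup ∧
  List.Chain' r H ∧
  (∀ x ∈ H, ∀ y, r x y → y ∈ H ∨ H.getLast? = some x) ∧
  (∀ x y, r x y → y ∈ H → x ∈ H ∨ H.head? = some y) ∧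
  (∀ x y, r x y → x ∈ H → y ∈ H → ∃ n : ℕ, H[n]? = some x ∧ H[n + 1]? = some y)

/-- The index `k` is a useful peak of the cost sequence `HC`. -/
def UsefulPeak (HC : List ℤ) (k : ℕ) : Prop :=
  k < HC.length ∧
  (∀ m < HC.length, (HC.take (m + 1)).sum ≤ (HC.take (k + 1)).sum) ∧
  (∀ m < k, 0 ≤ (HC.take (m + 1)).sum) ∧
  (∀ m, k < m → m < HC.length → HC.sum ≤ (HC.take (m + 1)).sum)

section ClusterAux

open List

set_option linter.unusedSectionVars false

lemma foldr_max_nonneg (l : List ℤ) : 0 ≤ l.foldr max 0 := by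
  induction l with
  | nil => simp
  | cons a l ih => simp only [foldr]; exact le_trans ih (le_max_right _ _)

lemma le_foldr_max {l : List ℤ} {x : ℤ} (h : x ∈ l) : x ≤ l.foldr max 0 := by
  induction l with
  | nil => simp at h
  | cons a l ih =>
    rcases mem_cons.mp h with rfl | h
    · exact le_max_left _ _
    · exact le_trans (ih h) (le_max_right _ _)

lemma foldr_max_le {l : List ℤ} {b : ℤ} (h0 : 0 ≤ b) (h : ∀ x ∈ l, x ≤ b) :
    l.foldr max 0 ≤ b := by
  induction l with
  | nil => simpa
  | cons a l ih =>
    simp only [foldr]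
    exact max_le (h a (by simp)) (ih fun x hx => h x (mem_cons_of_mem _ hx))

lemma height_nonneg (L : List ℤ) : 0 ≤ height L := foldr_max_nonneg _

lemma take_sum_le_height (L : List ℤ) (n : ℕ) : (L.take n).sum ≤ height L := by
  rcases le_or_gt n L.length with h | h
  · exact le_foldr_max (mem_map.mpr ⟨n, mem_range.mpr (by omega), rfl⟩)
  · rw [take_of_length_le (le_of_lt h)]
    have : (L.take L.length).sum ≤ height L :=
      le_foldr_max (mem_map.mpr ⟨L.length, mem_range.mpr (by omega), rfl⟩)
    simpa using this

lemma height_le {L : List ℤ} {b : ℤ} (h0 : 0 ≤ b) (h : ∀ n, (L.take n).sum ≤ b) :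
    height L ≤ b := by
  apply foldr_max_le h0
  intro x hx
  obtain ⟨kk, -, rfl⟩ := mem_map.mp hx
  exact h kk

/-- `x` occurs strictly before `y` in the list `L`. -/
def Before (L : List V) (x y : V) : Prop := ∃ l1 l2 l3, L = l1 ++ x :: (l2 ++ y :: l3)

lemma before_append_left_right {l1 l2 : List V} {x y : V} (hx : x ∈ l1) (hy : y ∈ l2) :
    Before (l1 ++ l2) x y := by
  obtain ⟨a, b, rfl⟩ := append_of_mem hx
  obtain ⟨d, e, rfl⟩ := append_of_mem hy
  exact ⟨a, b ++ d, e, by simp⟩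

lemma Before.append_context {l : List V} {x y : V} (h : Before l x y) (l0 l3 : List V) :
    Before (l0 ++ l ++ l3) x y := by
  obtain ⟨a, b, c, rfl⟩ := h
  exact ⟨l0 ++ a, b, c ++ l3, by simp⟩

lemma Before.filter {l : List V} {x y : V} (h : Before l x y) (p : V → Bool)
    (hx : p x = true) (hy : p y = true) : Before (l.filter p) x y := by
  obtain ⟨a, b, c, rfl⟩ := h
  refine ⟨a.filter p, b.filter p, c.filter p, ?_⟩
  simp [filter_append, filter_cons, hx, hy]

lemma before_of_getElem? {L : List V} {i j : ℕ} {x y : V} (hij : i < j)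
    (hx : L[i]? = some x) (hy : L[j]? = some y) : Before L x y := by
  have hi : i < L.length := by
    rcases List.getElem?_eq_some_iff.mp hx with ⟨h, -⟩; exact h
  have hmem : y ∈ L.drop (i + 1) := by
    have : (L.drop (i + 1))[j - (i + 1)]? = some y := by
      rw [getElem?_drop]; rwa [show i + 1 + (j - (i+1)) = j by omega]
    rcases List.getElem?_eq_some_iff.mp this with ⟨h2, he⟩
    exact he ▸ getElem_mem h2
  obtain ⟨d, e, hde⟩ := append_of_mem hmem
  refine ⟨L.take i, d, e, ?_⟩
  conv_lhs => rw [← take_append_drop i L, drop_eq_getElem_cons hi]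
  rw [hde]
  obtain ⟨h3, he3⟩ := List.getElem?_eq_some_iff.mp hx
  rw [he3]

lemma before_getElem? {L : List V} {x y : V} (h : Before L x y) :
    ∃ i j : ℕ, i < j ∧ L[i]? = some x ∧ L[j]? = some y := by
  obtain ⟨a, b, c, rfl⟩ := h
  refine ⟨a.length, a.length + 1 + b.length, ?_, ?_, ?_⟩
  · omega
  · rw [getElem?_append_right (le_refl _)]; simp
  · rw [getElem?_append_right (by omega)]
    rw [show a.length + 1 + b.length - a.length = b.length + 1 by omega]
    rw [getElem?_cons_succ, getElem?_append_right (le_refl _)]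
    simp

lemma isTopo_of_before {r : V → V → Prop} {T : List V} (hnd : T.Nodup)
    (hc : ∀ w : V, w ∈ T) (h : ∀ x y, r x y → Before T x y) : IsTopo r T := by
  refine ⟨hnd, hc, fun x y hxy ix iy hx hy => ?_⟩
  obtain ⟨i, j, hij, hxi, hyj⟩ := before_getElem? (h x y hxy)
  have hix : ix = i :=
    (getElem?_inj (List.getElem?_eq_some_iff.mp hx).1 hnd).mp (hx.trans hxi.symm)
  have hiy : iy = j :=
    (getElem?_inj (List.getElem?_eq_some_iff.mp hy).1 hnd).mp (hy.trans hyj.symm)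
  omega

lemma wsum_filter_split (c : V → ℤ) (p : V → Bool) (L : List V) :
    ((L.filter p).map c).sum + ((L.filter fun x => !p x).map c).sum = (L.map c).sum := by
  induction L with
  | nil => simp
  | cons a L ih =>
    cases hpa : p a <;> simp [filter_cons, hpa, ← ih] <;> ring

lemma exists_take_filter (p : V → Bool) (A : List V) (j : ℕ) :
    ∃ m ≤ A.length, (A.take m).filter p = (A.filter p).take j := by
  induction A generalizing j with
  | nil => exact ⟨0, by simp⟩
  | cons a A ih =>
    cases j with
    | zero => exact ⟨0, by simp⟩
    | succ j' =>
      by_cases hpa : p a = true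
      · obtain ⟨m, hm, he⟩ := ih j'
        exact ⟨m + 1, by simpa using hm, by simp [filter_cons, hpa, he]⟩
      · obtain ⟨m, hm, he⟩ := ih (j' + 1)
        refine ⟨m + 1, by simpa using hm, ?_⟩
        rw [take_succ_cons, filter_cons_of_neg (by simp [hpa]),
          filter_cons_of_neg (by simp [hpa])]
        exact he

lemma take_filter_eq_take (q : V → Bool) (A : List V) (m : ℕ) :
    ∃ t : ℕ, (A.take m).filter q = (A.filter q).take t :=
  ⟨((A.take m).filter q).length, prefix_iff_eq_take.mp (IsPrefix.filter q (take_prefix m A))⟩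

lemma dropWhile_ne_cons (v : V) : ∀ (S : List V), v ∈ S →
    S.dropWhile (fun x => decide (x ≠ v)) = v :: (S.dropWhile (fun x => decide (x ≠ v))).tail := by
  intro S hv
  induction S with
  | nil => simp at hv
  | cons a S ih =>
    by_cases hav : a = v
    · subst hav
      simp [dropWhile_cons]
    · have hv' : v ∈ S := by
        rcases mem_cons.mp hv with h | h
        · exact absurd h.symm hav
        · exact h
      rw [dropWhile_cons, if_pos (by simpa using hav)]
      exact ih hv'

end ClusterAux

open List in
/-- Clustering the nodes of a hump `H` to its useful peak `v` in a schedule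
`S` yields a schedule of no greater height. -/
theorem cluster_lemma (r : V → V → Prop) (c : V → ℤ) (S : List V)
    (hS : IsTopo r S) (H : List V) (hH : IsChainOf r H)
    (k : ℕ) (v : V) (hv : H[k]? = some v)
    (hpeak : UsefulPeak (H.map c) k)
    (T : List V)
    (hT : T = ((S.takeWhile fun x => decide (x ≠ v)).filter fun x => decide (x ∉ H))
        ++ H ++
        (((S.dropWhile fun x => decide (x ≠ v)).tail).filter fun x => decide (x ∉ H))) :
    IsTopo r T ∧ height (T.map c) ≤ height (S.map c) := by
  classical
  obtain ⟨hSnd, hSmem, hStopo⟩ := hS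
  obtain ⟨hHne, hHnd, hHchain, hlast, hhead, hcons⟩ := hH
  obtain ⟨hk0, hpk2, hpk3, hpk4⟩ := hpeak
  obtain ⟨hkH, hvk⟩ := List.getElem?_eq_some_iff.mp hv
  have hvH : v ∈ H := hvk ▸ getElem_mem hkH
  set p : V → Bool := fun x => decide (x ∉ H) with hp
  set A := S.takeWhile (fun x => decide (x ≠ v)) with hAdef
  set B := (S.dropWhile (fun x => decide (x ≠ v))).tail with hBdef
  set A' := A.filter p with hA'def
  set B' := B.filter p with hB'def
  have hSAB : S = A ++ v :: B := by
    conv_lhs => rw [← takeWhile_append_dropWhile (p := fun x => decide (x ≠ v)) (l := S),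
      dropWhile_ne_cons v S (hSmem v)]
  have hvA : v ∉ A := fun hm => by simpa using mem_takeWhile_imp hm
  have hSnd' : (A ++ v :: B).Nodup := hSAB ▸ hSnd
  obtain ⟨hAnd, hvBnd, hdisj⟩ := nodup_append'.mp hSnd'
  obtain ⟨hvB, hBnd⟩ := nodup_cons.mp hvBnd
  -- position machinery
  set pos : V → ℕ := fun x => S.idxOf x with hposdef
  have hpos : ∀ x : V, S[pos x]? = some x := by
    intro x
    have h1 : pos x < S.length := idxOf_lt_length_iff.mpr (hSmem x)
    rw [getElem?_eq_getElem h1]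
    exact congrArg some (getElem_idxOf h1)
  have huniq : ∀ (x : V) (i : ℕ), S[i]? = some x → i = pos x := fun x i hi =>
    (getElem?_inj (List.getElem?_eq_some_iff.mp hi).1 hSnd).mp (hi.trans (hpos x).symm)
  have hvS : S[A.length]? = some v := by
    rw [hSAB, getElem?_append_right (le_refl _)]; simp
  have hposv : pos v = A.length := (huniq v _ hvS).symm
  have hposA_lt : ∀ x ∈ A, pos x < A.length := by
    intro x hx
    obtain ⟨i, hi, he⟩ := getElem_of_mem hx
    have hSi : S[i]? = some x := by
      rw [hSAB, getElem?_append_left hi, getElem?_eq_getElem hi]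
      exact congrArg some he
    rw [← huniq x i hSi]; exact hi
  have hA_of_lt : ∀ x : V, pos x < A.length → x ∈ A := by
    intro x hx
    have h2 := hpos x
    rw [hSAB, getElem?_append_left hx] at h2
    obtain ⟨h3, h4⟩ := List.getElem?_eq_some_iff.mp h2
    exact h4 ▸ getElem_mem h3
  have hposB_gt : ∀ x ∈ B, A.length < pos x := by
    intro x hx
    obtain ⟨i, hi, he⟩ := getElem_of_mem hx
    have hSi : S[A.length + 1 + i]? = some x := by
      rw [hSAB, getElem?_append_right (by omega),
        show A.length + 1 + i - A.length = i + 1 by omega, getElem?_cons_succ,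
        getElem?_eq_getElem hi]
      exact congrArg some he
    rw [← huniq x _ hSi]; omega
  have hB_of_gt : ∀ x : V, A.length < pos x → x ∈ B := by
    intro x hx
    have h2 := hpos x
    rw [hSAB, getElem?_append_right (by omega)] at h2
    obtain ⟨e, he⟩ : ∃ e, pos x - A.length = e + 1 := ⟨pos x - A.length - 1, by omega⟩
    rw [he, getElem?_cons_succ] at h2
    obtain ⟨h3, h4⟩ := List.getElem?_eq_some_iff.mp h2
    exact h4 ▸ getElem_mem h3
  have htopo' : ∀ {x y : V}, r x y → pos x < pos y := fun {x y} h =>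
    hStopo x y h _ _ (hpos x) (hpos y)
  have hHmono : ∀ (i j : ℕ) (hi : i < H.length) (hj : j < H.length), i < j →
      pos H[i] < pos H[j] := by
    have hchain2 : Chain' (fun a b => pos a < pos b) H :=
      hHchain.imp (fun a b hab => htopo' hab)
    letI : IsTrans V (fun a b : V => pos a < pos b) := ⟨fun a b c h1 h2 => lt_trans h1 h2⟩
    have hpw := isChain_iff_pairwise.mp hchain2
    intro i j hi hj hij
    exact pairwise_iff_getElem.mp hpw i j hi hj hij
  have hPA : ∀ (i : ℕ) (hi : i < H.length), i < k → H[i] ∈ A := by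
    intro i hi hik
    apply hA_of_lt
    have h1 := hHmono i k hi hkH hik
    rwa [hvk, hposv] at h1
  have hQB : ∀ (i : ℕ) (hi : i < H.length), k < i → H[i] ∈ B := by
    intro i hi hik
    apply hB_of_gt
    have h1 := hHmono k i hkH hi hik
    rwa [hvk, hposv] at h1
  -- sortedness wrt positions
  set Rp : V → V → Prop := fun a b => pos a < pos b ∨ a = b with hRpdef
  letI : IsAntisymm V Rp := ⟨by
    intro a b h1 h2
    rcases h1 with h1 | h1
    · rcases h2 with h2 | h2
      · omega
      · exact h2.symm
    · exact h1⟩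
  have hSsorted : S.Pairwise Rp := by
    rw [pairwise_iff_getElem]
    intro i j hi hj hij
    left
    have e1 : i = pos S[i] := huniq _ _ (getElem?_eq_getElem hi)
    have e2 : j = pos S[j] := huniq _ _ (getElem?_eq_getElem hj)
    omega
  have hHsorted : H.Pairwise Rp := by
    rw [pairwise_iff_getElem]
    intro i j hi hj hij
    exact Or.inl (hHmono i j hi hj hij)
  have hASub : A <+ S := hSAB ▸ sublist_append_left A (v :: B)
  have hBSub : B <+ S := hSAB ▸ Sublist.trans (sublist_cons_self v B) (sublist_append_right A (v :: B))
  -- the two filter identities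
  have hAH : A.filter (fun x => decide (x ∈ H)) = H.take k := by
    refine (fun hq h1 h2 => Perm.eq_of_pairwise' (r := Rp) h1 h2 hq) ((perm_ext_iff_of_nodup (Nodup.filter _ hAnd)
      (Nodup.sublist (take_sublist _ _) hHnd)).mpr ?_) ?_ ?_
    · intro x
      simp only [mem_filter, decide_eq_true_iff]
      constructor
      · rintro ⟨hxA, hxH⟩
        obtain ⟨i, hi, rfl⟩ := getElem_of_mem hxH
        have hik : i < k := by
          rcases lt_trichotomy i k with h | h | h
          · exact h
          · exfalso; subst h; rw [hvk] at hxA; exact hvA hxA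
          · exact absurd (hQB i hi h) (fun hB => hdisj hxA (mem_cons_of_mem _ hB))
        have hilen : i < (H.take k).length := by
          rw [length_take]; omega
        have : (H.take k)[i] = H[i] := getElem_take
        exact this ▸ getElem_mem hilen
      · intro hx
        obtain ⟨i, hi, rfl⟩ := getElem_of_mem hx
        have hik : i < k := by
          have := hi; rw [length_take] at this; omega
        have hiH : i < H.length := by
          have := hi; rw [length_take] at this; omega
        have he : (H.take k)[i] = H[i] := getElem_take
        exact ⟨he ▸ hPA i hiH hik, he ▸ getElem_mem hiH⟩
    · exact Pairwise.sublist (Sublist.trans filter_sublist hASub) hSsorted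
    · exact Pairwise.sublist (take_sublist _ _) hHsorted
  have hBH : B.filter (fun x => decide (x ∈ H)) = H.drop (k + 1) := by
    refine (fun hq h1 h2 => Perm.eq_of_pairwise' (r := Rp) h1 h2 hq) ((perm_ext_iff_of_nodup (Nodup.filter _ hBnd)
      (Nodup.sublist (drop_sublist _ _) hHnd)).mpr ?_) ?_ ?_
    · intro x
      simp only [mem_filter, decide_eq_true_iff]
      constructor
      · rintro ⟨hxB, hxH⟩
        obtain ⟨i, hi, rfl⟩ := getElem_of_mem hxH
        have hik : k < i := by
          rcases lt_trichotomy i k with h | h | h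
          · exact absurd (hPA i hi h) (fun hA => hdisj hA (mem_cons_of_mem _ hxB))
          · exfalso; subst h; rw [hvk] at hxB; exact hvB hxB
          · exact h
        have hd : (H.drop (k + 1))[i - (k + 1)]? = some H[i] := by
          rw [getElem?_drop, show k + 1 + (i - (k + 1)) = i by omega]
          exact getElem?_eq_getElem hi
        obtain ⟨h3, h4⟩ := List.getElem?_eq_some_iff.mp hd
        exact h4 ▸ getElem_mem h3
      · intro hx
        obtain ⟨i, hi, rfl⟩ := getElem_of_mem hx
        have hiH : k + 1 + i < H.length := by
          have := hi; rw [length_drop] at this; omega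
        have he : (H.drop (k + 1))[i] = H[k + 1 + i] := getElem_drop
        exact ⟨he ▸ hQB _ hiH (by omega), he ▸ getElem_mem hiH⟩
    · exact Pairwise.sublist (Sublist.trans filter_sublist hBSub) hSsorted
    · exact Pairwise.sublist (drop_sublist _ _) hHsorted
  have hpcompl : ∀ (L : List V), L.filter (fun x => !p x) = L.filter (fun x => decide (x ∈ H)) := by
    intro L
    apply filter_congr
    intro x _
    simp [hp]
  have hAsplit : A.filter (fun x => !p x) = H.take k := by rw [hpcompl, hAH]
  have hBsplit : B.filter (fun x => !p x) = H.drop (k + 1) := by rw [hpcompl, hBH]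
  have hHPQ : H = H.take k ++ v :: H.drop (k + 1) := by
    conv_lhs => rw [← take_append_drop k H, drop_eq_getElem_cons hkH, hvk]
  -- T is a permutation of S
  have hPermA : A' ++ H.take k ~ A := by
    have := filter_append_perm p A
    rwa [hAsplit] at this
  have hPermB : B' ++ H.drop (k + 1) ~ B := by
    have := filter_append_perm p B
    rwa [hBsplit] at this
  have hTS : T ~ S := by
    rw [hT, hSAB]
    conv_lhs => rw [hHPQ]
    have heq : A' ++ (H.take k ++ v :: H.drop (k + 1)) ++ B'
        = (A' ++ H.take k) ++ v :: (H.drop (k + 1) ++ B') := by simp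
    rw [heq]
    exact Perm.append hPermA (Perm.cons v ((perm_append_comm).trans hPermB))
  have hTnd : T.Nodup := hTS.nodup_iff.mpr hSnd
  have hTmem : ∀ w : V, w ∈ T := fun w => hTS.mem_iff.mpr (hSmem w)
  -- topological order of T
  have hbefore : ∀ x y, r x y → Before T x y := by
    intro x y hxy
    by_cases hxH : x ∈ H <;> by_cases hyH : y ∈ H
    · -- both in H : consecutive in H
      obtain ⟨n, hn1, hn2⟩ := hcons x y hxy hxH hyH
      rw [hT]
      exact (before_of_getElem? (Nat.lt_succ_self n) hn1 hn2).append_context A' B'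
    · -- x ∈ H, y ∉ H : x is the last of H, y ∈ B'
      rcases hlast x hxH y hxy with h | h
      · exact absurd h hyH
      · have hxlast : H[H.length - 1]? = some x := by
          rw [← getLast?_eq_getElem?]; exact h
        obtain ⟨hl1, hl2⟩ := List.getElem?_eq_some_iff.mp hxlast
        have hxpos : A.length ≤ pos x := by
          rcases Nat.lt_or_ge k (H.length - 1) with hlt | hge
          · have := hHmono k (H.length - 1) hkH hl1 hlt
            rw [hvk, hposv, hl2] at this
            omega
          · have hkk : k = H.length - 1 := by omega
            have : x = v := by rw [← hl2, ← hvk]; congr 1; omega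
            subst this; omega
        have hyB : y ∈ B := hB_of_gt y (lt_of_le_of_lt hxpos (htopo' hxy))
        have hyB' : y ∈ B' := mem_filter.mpr ⟨hyB, by simp [hp, hyH]⟩
        rw [hT]
        exact before_append_left_right (mem_append_right A' hxH) hyB'
    · -- x ∉ H, y ∈ H : y is the head of H, x ∈ A'
      rcases hhead x y hxy hyH with h | h
      · exact absurd h hxH
      · have hyhead : H[0]? = some y := by rw [← head?_eq_getElem?]; exact h
        obtain ⟨hh1, hh2⟩ := List.getElem?_eq_some_iff.mp hyhead
        have hypos : pos y ≤ A.length := by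
          rcases Nat.eq_zero_or_pos k with hk0' | hk0'
          · have : y = v := by rw [← hh2, ← hvk]; congr 1; omega
            subst this; omega
          · have := hHmono 0 k hh1 hkH hk0'
            rw [hvk, hposv] at this
            rw [← hh2]
            omega
        have hxA : x ∈ A := hA_of_lt x (lt_of_lt_of_le (htopo' hxy) hypos)
        have hxA' : x ∈ A' := mem_filter.mpr ⟨hxA, by simp [hp, hxH]⟩
        rw [hT, append_assoc]
        exact before_append_left_right hxA' (mem_append_left B' hyH)
    · -- neither in H
      have hxv : x ≠ v := fun h => hxH (h ▸ hvH)
      have hyv : y ≠ v := fun h => hyH (h ▸ hvH)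
      have hxS := hSmem x
      have hyS := hSmem y
      rw [hSAB] at hxS hyS
      have hposxy := htopo' hxy
      rcases mem_append.mp hxS with hxA | hxB' <;>
        rcases mem_append.mp hyS with hyA | hyB'
      · -- x ∈ A, y ∈ A
        have hxA := hxA; have hyA := hyA
        have hxp := hposA_lt x hxA
        have hyp := hposA_lt y hyA
        have hAx : A[pos x]? = some x := by
          have := hpos x; rwa [hSAB, getElem?_append_left hxp] at this
        have hAy : A[pos y]? = some y := by
          have := hpos y; rwa [hSAB, getElem?_append_left hyp] at this
        have hbA : Before A' x y :=
          (before_of_getElem? hposxy hAx hAy).filter p (by simp [hp, hxH]) (by simp [hp, hyH])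
        rw [hT, append_assoc]
        have := hbA.append_context ([] : List V) (H ++ B')
        simpa using this
      · -- x ∈ A, y ∈ v :: B
        have hyB : y ∈ B := by
          rcases mem_cons.mp hyB' with h | h
          · exact absurd h hyv
          · exact h
        have hxA' : x ∈ A' := mem_filter.mpr ⟨hxA, by simp [hp, hxH]⟩
        have hyB2 : y ∈ B' := mem_filter.mpr ⟨hyB, by simp [hp, hyH]⟩
        rw [hT]
        exact before_append_left_right (mem_append_left H hxA') hyB2
      · -- x ∈ v :: B, y ∈ A : impossible
        exfalso
        have hxB : x ∈ B := by
          rcases mem_cons.mp hxB' with h | h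
          · exact absurd h hxv
          · exact h
        have := hposB_gt x hxB
        have := hposA_lt y hyA
        omega
      · -- x ∈ v :: B, y ∈ v :: B
        have hxB : x ∈ B := by
          rcases mem_cons.mp hxB' with h | h
          · exact absurd h hxv
          · exact h
        have hyB : y ∈ B := by
          rcases mem_cons.mp hyB' with h | h
          · exact absurd h hyv
          · exact h
        have hxp := hposB_gt x hxB
        have hyp := hposB_gt y hyB
        have hBx : B[pos x - A.length - 1]? = some x := by
          have h2 := hpos x
          rw [hSAB, getElem?_append_right (by omega),
            show pos x - A.length = (pos x - A.length - 1) + 1 by omega,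
            getElem?_cons_succ] at h2
          exact h2
        have hBy : B[pos y - A.length - 1]? = some y := by
          have h2 := hpos y
          rw [hSAB, getElem?_append_right (by omega),
            show pos y - A.length = (pos y - A.length - 1) + 1 by omega,
            getElem?_cons_succ] at h2
          exact h2
        have hbB : Before B' x y :=
          (before_of_getElem? (by omega) hBx hBy).filter p (by simp [hp, hxH]) (by simp [hp, hyH])
        rw [hT]
        have := hbB.append_context (A' ++ H) []
        simpa using this
  refine ⟨isTopo_of_before hTnd hTmem hbefore, ?_⟩
  -- height part
  have hsA : ((A'.map c)).sum + (((H.take k).map c)).sum = (A.map c).sum := by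
    have := wsum_filter_split c p A
    rwa [hAsplit] at this
  have hsB : ((B'.map c)).sum + (((H.drop (k + 1)).map c)).sum = (B.map c).sum := by
    have := wsum_filter_split c p B
    rwa [hBsplit] at this
  have hsH : (H.map c).sum
      = ((H.take k).map c).sum + c v + ((H.drop (k + 1)).map c).sum := by
    conv_lhs => rw [hHPQ]
    simp [sum_append]
    ring
  have hP0 : ∀ t, t ≤ k → 0 ≤ ((H.take t).map c).sum := by
    intro t ht
    cases t with
    | zero => simp
    | succ u =>
      have h := hpk3 u (by omega)
      rw [map_take]
      exact h
  have hsPk1 : ((H.take (k + 1)).map c).sum = ((H.take k).map c).sum + c v := by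
    rw [take_succ, hv]
    simp
  have hpk2' : ∀ u, 1 ≤ u → u ≤ H.length →
      ((H.take u).map c).sum ≤ ((H.take k).map c).sum + c v := by
    intro u h1 h2
    have h := hpk2 (u - 1) (by rw [length_map]; omega)
    rw [show u - 1 + 1 = u by omega] at h
    rw [← map_take, ← map_take, hsPk1] at h
    exact h
  have hQle : ∀ t, ((H.drop (k + 1)).map c).sum ≤ (((H.drop (k + 1)).take t).map c).sum := by
    intro t
    rcases Nat.lt_or_ge t (H.length - (k + 1)) with ht | ht
    · cases t with
      | zero =>
        have h := hpk2' H.length (by omega) (le_refl _)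
        rw [take_length] at h
        simp only [take_zero, map_nil, sum_nil]
        linarith [hsH]
      | succ u =>
        have hmlt : k + (u + 1) < H.length := by omega
        have h := hpk4 (k + (u + 1)) (by omega) (by rw [length_map]; omega)
        rw [← map_take, show k + (u + 1) + 1 = (k + 1) + (u + 1) by omega,
          take_add, map_append, sum_append, hsPk1, hsH] at h
        linarith
    · rw [take_of_length_le (by rw [length_drop]; omega)]
  apply height_le (height_nonneg _)
  intro n
  rw [← map_take]
  have hbound : ∀ m : ℕ, ((S.take m).map c).sum ≤ height (S.map c) := by
    intro m; rw [map_take]; exact take_sum_le_height _ m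
  by_cases h1 : n ≤ A'.length
  · have hTn : T.take n = A'.take n := by
      rw [hT, append_assoc, take_append_of_le_length h1]
    obtain ⟨m, hmle, hfe⟩ := exists_take_filter p A n
    obtain ⟨t, hft⟩ := take_filter_eq_take (fun x => !p x) A m
    rw [hAsplit, take_take] at hft
    have hSm : S.take m = A.take m := by rw [hSAB, take_append_of_le_length hmle]
    have hs1 := wsum_filter_split c p (A.take m)
    rw [hfe, hft] at hs1
    have h0 := hP0 (min t k) (min_le_right t k)
    have hb := hbound m
    rw [hSm] at hb
    rw [hTn]
    linarith
  · by_cases h2 : n ≤ A'.length + H.length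
    · set u := n - A'.length with hu
      have hu1 : 1 ≤ u := by omega
      have hu2 : u ≤ H.length := by omega
      have hTn : T.take n = A' ++ H.take u := by
        rw [hT, append_assoc, show n = A'.length + u by omega, take_append,
          take_of_length_le (by omega), Nat.add_sub_cancel_left, take_append_of_le_length hu2]
      have hSm : S.take (A.length + 1) = A ++ [v] := by
        rw [hSAB, take_append]
        simp
      have hb := hbound (A.length + 1)
      rw [hSm] at hb
      simp only [map_append, sum_append, map_cons, sum_cons, map_nil, sum_nil] at hb
      have h3 := hpk2' u hu1 hu2
      rw [hTn, map_append, sum_append]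
      linarith [hsA]
    · set j := n - A'.length - H.length with hj
      have hTn : T.take n = (A' ++ H) ++ B'.take j := by
        rw [hT, show n = (A' ++ H).length + j by rw [length_append]; omega, take_append,
          take_of_length_le (by omega), Nat.add_sub_cancel_left]
      obtain ⟨m', hm'le, hfe⟩ := exists_take_filter p B j
      obtain ⟨t, hft⟩ := take_filter_eq_take (fun x => !p x) B m'
      rw [hBsplit] at hft
      have hSm : S.take (A.length + 1 + m') = A ++ v :: B.take m' := by
        rw [hSAB, show A.length + 1 + m' = A.length + (1 + m') by omega, take_append,
          take_of_length_le (by omega), Nat.add_sub_cancel_left]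
        congr 1
        rw [show 1 + m' = m' + 1 by omega, take_succ_cons]
      have hs1 := wsum_filter_split c p (B.take m')
      rw [hfe, hft] at hs1
      have hq := hQle t
      have hb := hbound (A.length + 1 + m')
      rw [hSm] at hb
      simp only [map_append, sum_append, map_cons, sum_cons] at hb
      rw [hTn, map_append, sum_append, map_append, sum_append]
      linarith [hsA, hsH]
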